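/- For every real number α, the product C_∞ · exp(α•B) equals the 3×4 matrix with rows (cos α, −sin α, 0, 0), (sin α, cos α, 0, 0), (0, 0, sin α, cos α). -/

import Mathlib

open Matrix

/-- The null-polarity matrix used in Cremona's method. -/
def Bmat : Matrix (Fin 4) (Fin 4) ℝ :=
  !![0, -1, 0, 0;
     1,  0, 0, 0;
     0,  0, 0, -1;
     0,  0, 1, 0]

/-- Parallel projection along the z-axis, in homogeneous coordinates. -/
def Cinf : Matrix (Fin 3) (Fin 4) ℝ :=
  !![1, 0, 0, 0;
     0, 1, 0, 0;
     0, 0, 0, 1]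

/-- `Bmat` squares to `-1`, so it behaves like the imaginary unit. -/
lemma Bmat_sq : Bmat * Bmat = -1 := by
  ext i j
  fin_cases i <;> fin_cases j <;>
    simp [Bmat, Matrix.mul_apply, Fin.sum_univ_succ, Matrix.one_apply]

/-- The ℝ-algebra homomorphism `ℂ → Matrix (Fin 4) (Fin 4) ℝ` sending `I` to `Bmat`. -/
noncomputable def φ : ℂ →ₐ[ℝ] Matrix (Fin 4) (Fin 4) ℝ :=
  Complex.liftAux Bmat Bmat_sq

/-- The matrix exponential of `α • Bmat`. -/
lemma exp_smul_Bmat (α : ℝ) :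
    NormedSpace.exp (α • Bmat)
      = Real.cos α • (1 : Matrix (Fin 4) (Fin 4) ℝ) + Real.sin α • Bmat := by
  letI : NormedRing (Matrix (Fin 4) (Fin 4) ℝ) := Matrix.linftyOpNormedRing
  letI : NormedAlgebra ℝ (Matrix (Fin 4) (Fin 4) ℝ) := Matrix.linftyOpNormedAlgebra
  have hφc : Continuous φ := φ.toLinearMap.continuous_of_finiteDimensional
  have hI : φ Complex.I = Bmat := Complex.liftAux_apply_I _ _
  have h1 : α • Bmat = φ (α • Complex.I) := by
    rw [_root_.map_smul, hI]
  rw [h1]; erw [← NormedSpace.map_exp φ hφc]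
  have h2 : NormedSpace.exp (α • Complex.I) = Complex.exp (α * Complex.I) := by
    rw [Complex.real_smul, Complex.exp_eq_exp_ℂ]
  rw [h2, Complex.exp_mul_I]; simp only [φ]; rw [Complex.liftAux_apply]
  have hre : (Complex.cos ↑α + Complex.sin ↑α * Complex.I).re = Real.cos α := by
    simp [Complex.cos_ofReal_re, Complex.sin_ofReal_im]
  have him : (Complex.cos ↑α + Complex.sin ↑α * Complex.I).im = Real.sin α := by
    simp [Complex.cos_ofReal_im, Complex.sin_ofReal_re]
  rw [hre, him, Algebra.algebraMap_eq_smul_one]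

/-- For every real `α`, `C∞ * exp (α • B)` is the explicit `3 × 4` matrix below. -/
theorem Cinf_mul_exp_smul_Bmat (α : ℝ) :
    Cinf * NormedSpace.exp (α • Bmat) =
      !![Real.cos α, -Real.sin α, 0, 0;
         Real.sin α, Real.cos α, 0, 0;
         0, 0, Real.sin α, Real.cos α] := by
  rw [exp_smul_Bmat, Matrix.mul_add, Matrix.mul_smul, Matrix.mul_smul, Matrix.mul_one]
  have hCB : Cinf * Bmat = !![0, -1, 0, 0; 1, 0, 0, 0; 0, 0, 1, 0] := by
    ext i j
    fin_cases i <;> fin_cases j <;>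
      simp [Cinf, Bmat, Matrix.mul_apply, Fin.sum_univ_succ, Matrix.vecHead, Matrix.vecTail]
  rw [hCB]
  ext i j
  fin_cases i <;> fin_cases j <;>
    simp [Cinf, Matrix.vecHead, Matrix.vecTail]
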